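/- Let f be an (ℓ,q,S,c)-subharmonic function on C_L(0) ⊂ ℤ^n. Define the 'forbidden' radii set S'' = ∪_{r : S_r ∩ S ≠ ∅} ∪_{j=0}^{cℓ} S_{r+j}, where S_r = {x : ‖x‖ = r}, and the 'regular' radii R = { r ≥ 0 : C_r(0) ⊆ C_L(0) \ S'' }. Then for every r ∈ R with r + ℓ ≤ L, max_{x ∈ C_r(0)} |f(x)| ≤ q · max_{y ∈ C_{r+ℓ}(0)} |f(y)|. -/

import Mathlib

open scoped BigOperators

namespace MPLoc

/-- Max-norm on `ℤ^ι`. -/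
def supNorm {ι : Type*} [Fintype ι] (x : ι → ℤ) : ℕ :=
  Finset.univ.sup fun i => (x i).natAbs

/-- The cube `C_L(u) = {x : ‖x - u‖_∞ ≤ L}`. -/
noncomputable def cube {ι : Type*} [Fintype ι] [DecidableEq ι] (u : ι → ℤ) (L : ℕ) :
    Finset (ι → ℤ) :=
  Finset.Icc (fun i => u i - L) (fun i => u i + L)

/-- A bounded function `f : Λ → ℂ` is `(ℓ, q, S, c)`-subharmonic if for `x ∈ Λ \ S` with
`C_ℓ(x) ⊆ Λ` one has `|f(x)| ≤ q·max_{‖y-x‖=ℓ} |f(y)|`, while for `x ∈ S` one has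
`|f(x)| ≤ q·max_{y ∈ Λ, ℓ ≤ ‖y-x‖ ≤ (1+c)ℓ} |f(y)|`.
("`≤ q·max`" is expressed via upper bounds: `|f(x)| ≤ q·B` for every upper bound `B`.) -/
def IsSubharmonic {ι : Type*} [Fintype ι] [DecidableEq ι]
    (f : (ι → ℤ) → ℂ) (Λ : Set (ι → ℤ)) (ℓ : ℕ) (q : ℝ) (S : Set (ι → ℤ)) (c : ℝ) :
    Prop :=
  (∀ x ∈ Λ \ S, (cube x ℓ : Set (ι → ℤ)) ⊆ Λ →
    ∀ B : ℝ, (∀ y : ι → ℤ, supNorm (y - x) = ℓ → ‖f y‖ ≤ B) →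
      ‖f x‖ ≤ q * B) ∧
  (∀ x ∈ S, ∀ B : ℝ,
    (∀ y ∈ Λ, (ℓ : ℝ) ≤ (supNorm (y - x) : ℝ) → (supNorm (y - x) : ℝ) ≤ (1 + c) * ℓ →
      ‖f y‖ ≤ B) →
    ‖f x‖ ≤ q * B)

/-- The forbidden radii set `S'' = ∪_{r : S_r ∩ S ≠ ∅} ∪_{j=0}^{cℓ} S_{r+j}`, where
`S_r` is the sphere of max-norm radius `r` about the origin. -/
def forbidden {ι : Type*} [Fintype ι]
    (S : Set (ι → ℤ)) (ℓ : ℕ) (c : ℝ) : Set (ι → ℤ) :=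
  {x | ∃ z ∈ S, supNorm z ≤ supNorm x ∧ (supNorm x : ℝ) ≤ (supNorm z : ℝ) + c * ℓ}

lemma mem_cube_iff {ι : Type*} [Fintype ι] [DecidableEq ι] {u x : ι → ℤ} {L : ℕ} :
    x ∈ cube u L ↔ supNorm (x - u) ≤ L := by
  simp only [cube, Finset.mem_Icc, supNorm, Finset.sup_le_iff, Finset.mem_univ, true_imp_iff,
    Pi.le_def, Pi.sub_apply]
  constructor
  · intro h i
    have h1 := (h.1 i); have h2 := (h.2 i); omega
  · intro h
    constructor <;> intro i <;> have := h i <;> omega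

lemma supNorm_add_le {ι : Type*} [Fintype ι] (a b : ι → ℤ) :
    supNorm (a + b) ≤ supNorm a + supNorm b := by
  apply Finset.sup_le
  intro i _
  calc ((a + b) i).natAbs ≤ (a i).natAbs + (b i).natAbs := by
        simp only [Pi.add_apply]; exact Int.natAbs_add_le _ _
    _ ≤ supNorm a + supNorm b := by
        unfold supNorm
        exact Nat.add_le_add (Finset.le_sup (f := fun j => (a j).natAbs) (Finset.mem_univ i))
          (Finset.le_sup (f := fun j => (b j).natAbs) (Finset.mem_univ i))

/-- **One-step radial bound.** If `f` is `(ℓ,q,S,c)`-subharmonic on `C_L(0) ⊂ ℤ^n` and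
`r` is a regular radius, i.e. `C_r(0) ⊆ C_L(0) \ S''`, with `r + ℓ ≤ L`, then
`max_{x ∈ C_r(0)} |f x| ≤ q · max_{y ∈ C_{r+ℓ}(0)} |f y|`. -/
theorem radial_one_step (n : ℕ) (hn : 1 ≤ n)
    (f : (Fin n → ℤ) → ℂ) (M : ℝ) (hbdd : ∀ x, ‖f x‖ ≤ M)
    (L ℓ : ℕ) (hℓ : 0 < ℓ) (q : ℝ) (hq : 0 < q)
    (S : Set (Fin n → ℤ)) (hS : S ⊆ (cube (0 : Fin n → ℤ) L : Set (Fin n → ℤ)))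
    (c : ℝ) (hc : 1 ≤ c)
    (hsub : IsSubharmonic f (cube (0 : Fin n → ℤ) L : Set (Fin n → ℤ)) ℓ q S c)
    (r : ℕ)
    (hreg : (cube (0 : Fin n → ℤ) r : Set (Fin n → ℤ)) ⊆
      (cube (0 : Fin n → ℤ) L : Set (Fin n → ℤ)) \ forbidden S ℓ c)
    (hrL : r + ℓ ≤ L) :
    ∀ B : ℝ, (∀ y ∈ cube (0 : Fin n → ℤ) (r + ℓ), ‖f y‖ ≤ B) →
      ∀ x ∈ cube (0 : Fin n → ℤ) r, ‖f x‖ ≤ q * B := by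
  intro B hB x hx
  have hxr : supNorm x ≤ r := by
    have := mem_cube_iff.mp hx; simpa using this
  obtain ⟨hxL, hxF⟩ := hreg (Finset.mem_coe.mpr hx)
  have hxS : x ∉ S := by
    intro hxSmem
    exact hxF ⟨x, hxSmem, le_refl _, by
      have : (0:ℝ) ≤ c * ℓ := mul_nonneg (by linarith) (Nat.cast_nonneg _)
      linarith⟩
  apply hsub.1 x ⟨hxL, hxS⟩
  · intro y hy
    have hyx : supNorm (y - x) ≤ ℓ := mem_cube_iff.mp hy
    have : supNorm y ≤ r + ℓ := by
      have h1 : supNorm ((y - x) + x) ≤ supNorm (y - x) + supNorm x := supNorm_add_le _ _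
      simp only [sub_add_cancel] at h1
      omega
    exact Finset.mem_coe.mpr (mem_cube_iff.mpr (by simpa using this.trans hrL))
  · intro y hyx
    apply hB
    have : supNorm y ≤ r + ℓ := by
      have h1 : supNorm ((y - x) + x) ≤ supNorm (y - x) + supNorm x := supNorm_add_le _ _
      simp only [sub_add_cancel] at h1
      omega
    exact mem_cube_iff.mpr (by simpa using this)

end MPLoc
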